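/- Let G be a topological group, f: G → ℝ continuous, and K ⊆ G a compact neighbourhood of the identity. Suppose f attains its maximum value M over K only at points in the interior of K. Then there exists an open neighbourhood V of the identity such that for all v ∈ V, max_{u∈K} f(v⁻¹u) = max_{u∈K} f(u). -/

import Mathlib

/-- Local invariance of compact max-pooling: if `K` is a compact neighbourhood of the
identity and the continuous function `f` attains its maximum `M` over `K` only at interior
points of `K`, then there is an open neighbourhood `V` of the identity such that
`max_{u ∈ K} f(v⁻¹u) = max_{u ∈ K} f(u)` for all `v ∈ V`. -/
theorem stmt_11 {G : Type*} [Group G] [TopologicalSpace G] [IsTopologicalGroup G]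
    (f : G → ℝ) (hf : Continuous f)
    (K : Set G) (hK : IsCompact K) (hKnbhd : K ∈ nhds (1 : G))
    (M : ℝ) (hM : M = sSup (f '' K))
    (hattain : ∃ u ∈ K, f u = M)
    (hint : ∀ u ∈ K, f u = M → u ∈ interior K) :
    ∃ V : Set G, IsOpen V ∧ (1 : G) ∈ V ∧
      ∀ v ∈ V, sSup ((fun u => f (v⁻¹ * u)) '' K) = M := by
  obtain ⟨x₀, hx₀K, hx₀f⟩ := hattain
  have hbdd : ∀ u ∈ K, f u ≤ M := by
    intro u hu
    rw [hM]
    exact le_csSup (hK.bddAbove_image hf.continuousOn) ⟨u, hu, rfl⟩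
  set W := interior K ∪ {x | f x < M} with hW
  have hWopen : IsOpen W := isOpen_interior.union (isOpen_lt hf continuous_const)
  have hKW : K ⊆ W := by
    intro u hu
    rcases lt_or_eq_of_le (hbdd u hu) with h | h
    · exact Or.inr h
    · exact Or.inl (hint u hu h)
  have hfW : ∀ x ∈ W, f x ≤ M := by
    rintro x (hx | hx)
    · exact hbdd x (interior_subset hx)
    · exact le_of_lt hx
  obtain ⟨V₁, hV₁, hV₁K⟩ := compact_open_separated_mul_left hK hWopen hKW
  set V₂ : Set G := {v : G | v * x₀ ∈ interior K} with hV₂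
  have hV₂open : IsOpen V₂ := isOpen_interior.preimage (continuous_mul_right x₀)
  have h1V₂ : (1 : G) ∈ V₂ := by
    simp only [hV₂, Set.mem_setOf_eq, one_mul]
    exact hint x₀ hx₀K hx₀f
  refine ⟨(interior V₁)⁻¹ ∩ V₂, (isOpen_interior.inv).inter hV₂open, ⟨?_, h1V₂⟩, ?_⟩
  · rw [Set.mem_inv, inv_one]
    exact mem_interior_iff_mem_nhds.mpr hV₁
  · rintro v ⟨hv1, hv2⟩
    refine IsGreatest.csSup_eq ⟨⟨v * x₀, interior_subset hv2, ?_⟩, ?_⟩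
    · simp [hx₀f]
    · rintro y ⟨u, hu, rfl⟩
      exact hfW _ (hV₁K (Set.mul_mem_mul (interior_subset (Set.mem_inv.mp hv1)) hu))
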